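/- Converse of the optimality statement: any selection rule S | x, y that achieves the global maximum of I(X_S; Y) - I(X_{\bar S}; Y) must, with probability one over p(x, y), assign all its probability mass to the set of pointwise maximizers S*(x, y) of E_{y|x_S, x_{\bar S}}[log p(y | x_S) - log p(y | x_{\bar S})]. -/
import Mathlib


/-- Converse of optimality: any selection rule achieving the global maximum must,
with probability one, put all its mass on the pointwise maximizers `S*`. -/
theorem stmt_7 {X Y : Type*} [Fintype X] [Fintype Y] (d : ℕ)
    (p : X → Y → ℝ) (hp : ∀ x y, 0 ≤ p x y) (hpsum : ∑ x, ∑ y, p x y = 1)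
    (f : X → Y → Finset (Fin d) → ℝ)
    (π : X → Y → Finset (Fin d) → ℝ)
    (hπ : ∀ x y S, 0 ≤ π x y S) (hπsum : ∀ x y, ∑ S, π x y S = 1)
    (Sstar : X → Y → Finset (Fin d))
    (hSstar : ∀ x y S, f x y S ≤ f x y (Sstar x y))
    (hopt : (∑ x, ∑ y, p x y * ∑ S, π x y S * f x y S) =
      ∑ x, ∑ y, p x y * f x y (Sstar x y)) :
    ∀ x y, 0 < p x y → ∀ S, 0 < π x y S → f x y S = f x y (Sstar x y) := by
  -- pointwise bound: ∑ S π S f S ≤ f Sstar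
  have hpt : ∀ x y, ∑ S, π x y S * f x y S ≤ f x y (Sstar x y) := by
    intro x y
    calc ∑ S, π x y S * f x y S ≤ ∑ S, π x y S * f x y (Sstar x y) := by
          apply Finset.sum_le_sum
          intro S _
          exact mul_le_mul_of_nonneg_left (hSstar x y S) (hπ x y S)
      _ = f x y (Sstar x y) := by rw [← Finset.sum_mul, hπsum, one_mul]
  -- equality of double sums with termwise ≤ forces termwise equality
  have hterm : ∀ x y, p x y * ∑ S, π x y S * f x y S = p x y * f x y (Sstar x y) := by
    have h2 : ∀ x, ∑ y, p x y * ∑ S, π x y S * f x y S = ∑ y, p x y * f x y (Sstar x y) := by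
      have := Finset.sum_eq_sum_iff_of_le (s := (Finset.univ : Finset X))
        (f := fun x => ∑ y, p x y * ∑ S, π x y S * f x y S)
        (g := fun x => ∑ y, p x y * f x y (Sstar x y))
        (fun x _ => Finset.sum_le_sum fun y _ =>
          mul_le_mul_of_nonneg_left (hpt x y) (hp x y))
      intro x
      exact (this.mp hopt) x (Finset.mem_univ x)
    intro x y
    have := Finset.sum_eq_sum_iff_of_le (s := (Finset.univ : Finset Y))
      (f := fun y => p x y * ∑ S, π x y S * f x y S)
      (g := fun y => p x y * f x y (Sstar x y))
      (fun y _ => mul_le_mul_of_nonneg_left (hpt x y) (hp x y))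
    exact (this.mp (h2 x)) y (Finset.mem_univ y)
  intro x y hpxy S hπS
  have hsum : ∑ S, π x y S * f x y S = f x y (Sstar x y) :=
    mul_left_cancel₀ (ne_of_gt hpxy) (hterm x y)
  -- ∑ π S * (f Sstar - f S) = 0 with nonneg terms
  have hzero : ∑ T, π x y T * (f x y (Sstar x y) - f x y T) = 0 := by
    have : ∑ T, π x y T * (f x y (Sstar x y) - f x y T)
        = (∑ T, π x y T * f x y (Sstar x y)) - ∑ T, π x y T * f x y T := by
      rw [← Finset.sum_sub_distrib]
      congr 1; ext T; ring
    rw [this, ← Finset.sum_mul, hπsum, one_mul, hsum, sub_self]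
  have := (Finset.sum_eq_zero_iff_of_nonneg (fun T _ =>
    mul_nonneg (hπ x y T) (sub_nonneg.mpr (hSstar x y T)))).mp hzero S (Finset.mem_univ S)
  have hdiff : f x y (Sstar x y) - f x y S = 0 := by
    rcases mul_eq_zero.mp this with h | h
    · exact absurd h (ne_of_gt hπS)
    · exact h
  linarith
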